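/- Assume k is even and tr(a) = 1. For x ∈ F, let ℓ be the number of common neighbours of the vertices x and ∞ in G_k(a), let ε = 1 if tr(x) = 0 (i.e. x and ∞ are adjacent) and ε = 0 otherwise, and let K = ∑_{z ∈ F, z ≠ 0} (−1)^{tr(z + (x² + x + a)/z)} (an integer). Then 4ℓ = q + 1 + K − 4ε. -/

import Mathlib

/-- The absolute trace `tr(x) = x + x² + x⁴ + ⋯ + x^{2^{k-1}}` of a finite field
of order `2^k`, taking values in the prime subfield `{0, 1} ⊆ F`. -/
def fieldTr {F : Type*} [Field F] (k : ℕ) (x : F) : F :=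
  ∑ i ∈ Finset.range k, x ^ (2 ^ i)

/-- The defining relation of the graph `G_k(a)` on the vertex set `F ∪ {∞}`
(with `∞ = none`): distinct `x, y ∈ F` are related iff
`tr((xy + x + a)/(x + y)) = 0`, and `x ∈ F` is related to `∞` iff `tr(x) = 0`. -/
def adjRel {F : Type*} [Field F] (k : ℕ) (a : F) : Option F → Option F → Prop
  | some x, some y => fieldTr k ((x * y + x + a) / (x + y)) = 0
  | some x, none   => fieldTr k x = 0
  | none,   some y => fieldTr k y = 0
  | none,   none   => False

/-- The graph `G_k(a)` on the vertex set `F ∪ {∞}`.  (When `tr(1) = 0`, the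
relation `adjRel` is symmetric on distinct vertices, so `fromRel` produces
exactly the graph whose adjacency is given by `adjRel`.) -/
def Gka {F : Type*} [Field F] (k : ℕ) (a : F) : SimpleGraph (Option F) :=
  SimpleGraph.fromRel (adjRel k a)

/-- The additive character `ψ(z) = (−1)^{tr(z)}`. -/
def psi {F : Type*} [Field F] [DecidableEq F] (k : ℕ) (z : F) : ℤ :=
  if fieldTr k z = 0 then 1 else -1

section helpers
variable {F : Type*} [Field F] [CharP F 2] (k : ℕ)

lemma two_zero : (2 : F) = 0 := by exact_mod_cast CharP.cast_eq_zero F 2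

lemma fieldTr_add (u v : F) : fieldTr k (u + v) = fieldTr k u + fieldTr k v := by
  unfold fieldTr
  rw [← Finset.sum_add_distrib]
  exact Finset.sum_congr rfl fun i _ => add_pow_char_pow u v 2 i

lemma fieldTr_zero : fieldTr k (0 : F) = 0 := by
  unfold fieldTr
  refine Finset.sum_eq_zero fun i _ => ?_
  exact zero_pow (Nat.pos_of_ne_zero (by positivity)).ne'

lemma fieldTr_one (hk : Even k) : fieldTr k (1 : F) = 0 := by
  unfold fieldTr
  simp only [one_pow, Finset.sum_const, Finset.card_range, nsmul_eq_mul, mul_one]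
  exact (CharP.cast_eq_zero_iff F 2 k).mpr hk.two_dvd

variable [Fintype F]

variable [Fintype F]

lemma fieldTr_sq (hcard : Fintype.card F = 2 ^ k) (u : F) :
    fieldTr k (u ^ 2) = fieldTr k u := by
  unfold fieldTr
  have h1 : ∀ i, (u ^ 2) ^ (2 ^ i) = u ^ (2 ^ (i + 1)) := fun i => by
    rw [← pow_mul, pow_succ']
  have h2 : u ^ (2 ^ k) = u := by rw [← hcard, FiniteField.pow_card]
  calc ∑ i ∈ Finset.range k, (u ^ 2) ^ (2 ^ i)
      = ∑ i ∈ Finset.range k, u ^ (2 ^ (i + 1)) := by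
        exact Finset.sum_congr rfl fun i _ => h1 i
    _ = ∑ i ∈ Finset.range k, u ^ (2 ^ i) := by
        have key : (∑ i ∈ Finset.range k, u ^ (2 ^ (i + 1))) + u ^ ((2:ℕ)^(0:ℕ)) =
            (∑ i ∈ Finset.range k, u ^ (2 ^ i)) + u ^ (2 ^ k) := by
          rw [← Finset.sum_range_succ' (fun i => u ^ (2 ^ i)) k,
            Finset.sum_range_succ]
        rw [h2] at key
        norm_num at key
        exact key

lemma fieldTr_mem (hcard : Fintype.card F = 2 ^ k) (u : F) :
    fieldTr k u = 0 ∨ fieldTr k u = 1 := by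
  have hsq : fieldTr k u ^ 2 = fieldTr k u := by
    have : fieldTr k u ^ 2 = fieldTr k (u ^ 2) := by
      unfold fieldTr
      rw [sum_pow_char]
      exact Finset.sum_congr rfl fun i _ => by rw [← pow_mul, ← pow_mul, mul_comm]
    rw [this, fieldTr_sq k hcard]
  have : fieldTr k u * (fieldTr k u - 1) = 0 := by ring_nf; linear_combination hsq
  rcases mul_eq_zero.mp this with h | h
  · exact Or.inl h
  · exact Or.inr (by have := sub_eq_zero.mp h; exact this)


variable [DecidableEq F]

lemma psi_zero : psi k (0 : F) = 1 := by simp [psi, fieldTr_zero]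

lemma psi_add (hcard : Fintype.card F = 2 ^ k) (u v : F) :
    psi k (u + v) = psi k u * psi k v := by
  unfold psi
  rw [fieldTr_add]
  rcases fieldTr_mem k hcard u with h | h <;> rcases fieldTr_mem k hcard v with h' | h' <;>
    simp [h, h', one_ne_zero, two_zero (F := F)] <;>
    simp [show (1 : F) + 1 = 0 by linear_combination two_zero (F := F)]

lemma psi_sq (u : F) : psi k u * psi k u = 1 := by
  unfold psi; split <;> norm_num

lemma psi_sum_univ (hcard : Fintype.card F = 2 ^ k) {a : F} (ha : fieldTr k a = 1) :
    ∑ z : F, psi k z = 0 := by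
  have h1 : ∑ z : F, psi k (z + a) = ∑ z : F, psi k z :=
    Fintype.sum_equiv (Equiv.addRight a) _ _ (fun z => rfl)
  have h2 : ∀ z : F, psi k (z + a) = - psi k z := fun z => by
    rw [psi_add k hcard]
    have : psi k a = -1 := by simp [psi, ha]
    rw [this]; ring
  simp only [h2, Finset.sum_neg_distrib] at h1
  linarith

lemma psi_sum_erase (hcard : Fintype.card F = 2 ^ k) {a : F} (ha : fieldTr k a = 1) :
    ∑ z ∈ Finset.univ.erase (0 : F), psi k z = -1 := by
  have := Finset.sum_erase_add Finset.univ (psi k) (Finset.mem_univ (0 : F))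
  rw [psi_sum_univ k hcard ha] at this
  rw [psi_zero] at this
  linarith

lemma psi_sum_erase_div (hcard : Fintype.card F = 2 ^ k) {a : F} (ha : fieldTr k a = 1)
    {c : F} (hc : c ≠ 0) :
    ∑ z ∈ Finset.univ.erase (0 : F), psi k (c / z) = -1 := by
  rw [← psi_sum_erase k hcard ha]
  refine Finset.sum_nbij' (fun z => c / z) (fun z => c / z) ?_ ?_ ?_ ?_ ?_
  · intro z hz
    simp only [Finset.mem_erase, Finset.mem_univ, and_true] at hz ⊢
    exact div_ne_zero hc hz
  · intro z hz
    simp only [Finset.mem_erase, Finset.mem_univ, and_true] at hz ⊢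
    exact div_ne_zero hc hz
  · intro z hz
    simp only [Finset.mem_erase, Finset.mem_univ, and_true] at hz
    field_simp
  · intro z hz
    simp only [Finset.mem_erase, Finset.mem_univ, and_true] at hz
    field_simp
  · intro z hz; rfl

end helpers

theorem codegree_with_infinity_eq_kloosterman
    {F : Type*} [Field F] [Fintype F] [DecidableEq F] [CharP F 2] (k : ℕ)
    (hk : Even k) (hcard : Fintype.card F = 2 ^ k) (a : F) (ha : fieldTr k a = 1)
    (x : F) :
    4 * (((Gka k a).commonNeighbors (some x) none).ncard : ℤ) =
      (Fintype.card F : ℤ) + 1 +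
        (∑ z ∈ Finset.univ.erase (0 : F), psi k (z + (x ^ 2 + x + a) / z)) -
        4 * (if fieldTr k x = 0 then 1 else 0) := by
  classical
  have h2 : (2 : F) = 0 := two_zero
  have h10 : (1 : F) ≠ 0 := one_ne_zero
  -- `c ≠ 0`
  have hc : x ^ 2 + x + a ≠ 0 := by
    intro h
    have : fieldTr k (x ^ 2 + x + a) = (0 : F) := by rw [h, fieldTr_zero]
    rw [fieldTr_add, fieldTr_add, fieldTr_sq k hcard, ha] at this
    have : (1 : F) = 0 := by linear_combination this - (fieldTr k x) * h2
    exact h10 this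
  -- the finset of common neighbours
  set S : Finset F := (Finset.univ.erase x).filter
    (fun y => fieldTr k ((x * y + x + a) / (x + y)) = 0 ∧ fieldTr k y = 0) with hS
  -- symmetry of the relation
  have hsymm : ∀ y : F, y ≠ x →
      fieldTr k ((y * x + y + a) / (y + x)) = fieldTr k ((x * y + x + a) / (x + y)) := by
    intro y hyx
    have hxy : x + y ≠ 0 := by
      intro h
      exact hyx (by linear_combination h - x * h2)
    have hnum : y * x + y + a = (x * y + x + a) + (x + y) := by
      linear_combination (-x) * h2
    rw [add_comm y x, hnum, add_div, div_self hxy, fieldTr_add, fieldTr_one k hk, add_zero]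
  -- identify common neighbours
  have hset : (Gka k a).commonNeighbors (some x) none = some '' ↑S := by
    ext w
    cases w with
    | none =>
      simp only [SimpleGraph.mem_commonNeighbors, Gka, SimpleGraph.fromRel_adj]
      simp [adjRel]
    | some y =>
      simp only [SimpleGraph.mem_commonNeighbors, Gka, SimpleGraph.fromRel_adj]
      constructor
      · rintro ⟨⟨hne, hadj⟩, -, hy | hy⟩
        · have hyx : y ≠ x := fun h => hne (by rw [h])
          refine ⟨y, ?_, rfl⟩
          simp only [hS, Finset.coe_filter, Set.mem_setOf_eq, Finset.mem_erase,
            Finset.mem_univ, and_true]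
          refine ⟨hyx, ?_, hy⟩
          rcases hadj with h | h
          · exact h
          · rw [← hsymm y hyx]; exact h
        · have hyx : y ≠ x := fun h => hne (by rw [h])
          refine ⟨y, ?_, rfl⟩
          simp only [hS, Finset.coe_filter, Set.mem_setOf_eq, Finset.mem_erase,
            Finset.mem_univ, and_true]
          refine ⟨hyx, ?_, hy⟩
          rcases hadj with h | h
          · exact h
          · rw [← hsymm y hyx]; exact h
      · rintro ⟨y', hy', hy'eq⟩
        obtain rfl : y' = y := Option.some_injective _ hy'eq
        simp only [hS, Finset.coe_filter, Set.mem_setOf_eq, Finset.mem_erase,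
          Finset.mem_univ, and_true] at hy'
        obtain ⟨hyx, htr, hy0⟩ := hy'
        exact ⟨⟨fun h => hyx (Option.some_injective _ h).symm, Or.inl htr⟩,
          ⟨fun h => (by cases h), Or.inl hy0⟩⟩
  have hℓ : (((Gka k a).commonNeighbors (some x) none).ncard : ℤ) = (S.card : ℤ) := by
    rw [hset, Set.ncard_image_of_injective _ (Option.some_injective F),
      Set.ncard_coe_finset]
  rw [hℓ]
  -- counting step
  have step1 : ((S.card : ℤ)) = ∑ y ∈ Finset.univ.erase x,
      (if fieldTr k ((x * y + x + a) / (x + y)) = 0 ∧ fieldTr k y = 0 then (1 : ℤ) else 0) := by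
    rw [hS, Finset.sum_boole]
  have step2 : (4 : ℤ) * (S.card : ℤ) = ∑ y ∈ Finset.univ.erase x,
      (1 + psi k y) * (1 + psi k ((x * y + x + a) / (x + y))) := by
    rw [step1, Finset.mul_sum]
    refine Finset.sum_congr rfl fun y _ => ?_
    by_cases h1 : fieldTr k y = 0 <;>
      by_cases hg : fieldTr k ((x * y + x + a) / (x + y)) = 0 <;>
      simp [psi, h1, hg]
  -- change of variables z = x + y
  have step3 : ∑ y ∈ Finset.univ.erase x,
      (1 + psi k y) * (1 + psi k ((x * y + x + a) / (x + y))) =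
      ∑ z ∈ Finset.univ.erase (0 : F),
      (1 + psi k (x + z)) * (1 + psi k (x + (x ^ 2 + x + a) / z)) := by
    refine Finset.sum_nbij' (fun y => x + y) (fun z => x + z) ?_ ?_ ?_ ?_ ?_
    · intro y hy
      simp only [Finset.mem_erase, Finset.mem_univ, and_true] at hy ⊢
      intro h
      exact hy (by linear_combination h - x * h2)
    · intro z hz
      simp only [Finset.mem_erase, Finset.mem_univ, and_true] at hz ⊢
      intro h
      exact hz (by linear_combination h)
    · intro y _; linear_combination x * h2
    · intro z _; linear_combination x * h2
    · intro y hy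
      simp only [Finset.mem_erase, Finset.mem_univ, and_true] at hy
      have hxy : x + y ≠ 0 := fun h => hy (by linear_combination h - x * h2)
      have e1 : x + (x + y) = y := by linear_combination x * h2
      have e2 : (x * y + x + a) / (x + y) = x + (x ^ 2 + x + a) / (x + y) := by
        rw [eq_comm, add_comm, div_add' _ _ _ hxy]
        congr 1
        linear_combination x ^ 2 * h2
      rw [e1, e2]
  -- expand the product
  have step4 : ∑ z ∈ Finset.univ.erase (0 : F),
      (1 + psi k (x + z)) * (1 + psi k (x + (x ^ 2 + x + a) / z)) =
      ∑ z ∈ Finset.univ.erase (0 : F),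
      (1 + psi k x * psi k z + psi k x * psi k ((x ^ 2 + x + a) / z) +
        psi k (z + (x ^ 2 + x + a) / z)) := by
    refine Finset.sum_congr rfl fun z _ => ?_
    rw [psi_add k hcard, psi_add k hcard, psi_add k hcard]
    linear_combination (psi k z * psi k ((x ^ 2 + x + a) / z)) * psi_sq k x
  have step5 : ∑ z ∈ Finset.univ.erase (0 : F),
      (1 + psi k x * psi k z + psi k x * psi k ((x ^ 2 + x + a) / z) +
        psi k (z + (x ^ 2 + x + a) / z)) =
      ((Fintype.card F : ℤ) - 1) + psi k x * (-1) + psi k x * (-1) +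
        ∑ z ∈ Finset.univ.erase (0 : F), psi k (z + (x ^ 2 + x + a) / z) := by
    rw [Finset.sum_add_distrib, Finset.sum_add_distrib, Finset.sum_add_distrib,
      ← Finset.mul_sum, ← Finset.mul_sum, psi_sum_erase k hcard ha,
      psi_sum_erase_div k hcard ha hc, Finset.sum_const,
      Finset.card_erase_of_mem (Finset.mem_univ _), Finset.card_univ]
    have : (1 : ℕ) ≤ Fintype.card F := Fintype.card_pos
    simp only [nsmul_eq_mul, mul_one]
    rw [Nat.cast_sub this]
    push_cast
    ring
  rw [step2, step3, step4, step5]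
  by_cases hx : fieldTr k x = 0 <;> simp [psi, hx] <;> ring
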